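/- Let n ≥ 2 be an integer, a > 0, and let φ : [a,∞) → [0,∞) be a nondecreasing function satisfying the doubling condition: there exist constants γ > 0 and T ≥ a such that φ(2t) ≤ γ·φ(t) for all t ≥ T. Let x0 ∈ ℝⁿ and let Q : ℝⁿ → [0,∞] be a Lebesgue measurable function for which there exists a constant 0 < C < ∞ with limsup_{ε→0⁺} (φ(1/ε)/(Ωₙ·εⁿ)) · ∫_{B(x0,ε)} Q(x) dm(x) ≤ C. Then there exist ε0′ > 0 and ε1 ∈ (0, ε0′) such that for every ε ∈ (0, ε1) one has ∫_{{x : ε < |x−x0| < ε0′}} φ(1/|x−x0|)·Q(x)/|x−x0|ⁿ dm(x) ≤ C₁·log(1/ε), where C₁ = γ·C·Ωₙ·2ⁿ/log 2. -/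

import Mathlib

set_option maxHeartbeats 1000000


open MeasureTheory Metric Filter Set
open scoped ENNReal NNReal

/-- Proposition 3.1 (quoted from [RSS]): if `φ` is a nondecreasing nonnegative function
on `[a, ∞)` with the doubling condition and the integral means of `Q` over balls
`B(x₀, ε)` weighted by `φ(1/ε)` are bounded by `C`, then
`∫_{ε<|x-x₀|<ε₀'} φ(1/|x-x₀|) Q(x)/|x-x₀|ⁿ dm(x) ≤ C₁ log(1/ε)` for all small `ε`,
with `C₁ = γ C Ωₙ 2ⁿ / log 2`. -/
theorem averages_over_rings_estimate
    (n : ℕ) (hn : 2 ≤ n) (a : ℝ) (ha : 0 < a)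
    (φ : ℝ → ℝ)
    (hφ_nonneg : ∀ t, a ≤ t → 0 ≤ φ t)
    (hφ_mono : ∀ s t, a ≤ s → s ≤ t → φ s ≤ φ t)
    (γ T : ℝ) (hγ : 0 < γ) (hT : a ≤ T)
    (hdoubling : ∀ t, T ≤ t → φ (2 * t) ≤ γ * φ t)
    (x0 : EuclideanSpace ℝ (Fin n))
    (Q : EuclideanSpace ℝ (Fin n) → ℝ≥0∞) (hQ : Measurable Q)
    (C : ℝ) (hC : 0 < C)
    (hlimsup :
      Filter.limsup
        (fun ε : ℝ =>
          ENNReal.ofReal (φ (1 / ε)) /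
              (volume (ball (0 : EuclideanSpace ℝ (Fin n)) 1) * ENNReal.ofReal (ε ^ n)) *
            ∫⁻ x in ball x0 ε, Q x)
        (nhdsWithin (0 : ℝ) (Set.Ioi 0)) ≤ ENNReal.ofReal C) :
    ∃ ε0' > (0 : ℝ), ∃ ε1 ∈ Set.Ioo (0 : ℝ) ε0', ∀ ε ∈ Set.Ioo (0 : ℝ) ε1,
      ∫⁻ x in {x : EuclideanSpace ℝ (Fin n) | ε < dist x x0 ∧ dist x x0 < ε0'},
          ENNReal.ofReal (φ (1 / dist x x0)) * Q x / ENNReal.ofReal ((dist x x0) ^ n) ≤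
        ENNReal.ofReal
          (γ * C * (volume (ball (0 : EuclideanSpace ℝ (Fin n)) 1)).toReal * 2 ^ n /
              Real.log 2 * Real.log (1 / ε)) := by
  have hC2 : (0:ℝ) < 2 := by norm_num
  set Ω : ℝ≥0∞ := volume (ball (0 : EuclideanSpace ℝ (Fin n)) 1) with hΩdef
  have hΩ0 : Ω ≠ 0 := (measure_ball_pos volume 0 one_pos).ne'
  have hΩtop : Ω ≠ ⊤ := measure_ball_lt_top.ne
  set W : ℝ := Ω.toReal with hWdef
  have hW0 : 0 < W := ENNReal.toReal_pos hΩ0 hΩtop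
  -- the ratio constants
  set μr : ℝ := (2:ℝ) ^ ((4:ℝ)⁻¹) with hμrdef
  have hμr1 : 1 < μr := by
    rw [hμrdef, Real.one_lt_rpow_iff_of_pos hC2]
    left; constructor <;> norm_num
  have hμr0 : 0 < μr := lt_trans one_pos hμr1
  have hμr4 : μr ^ (4:ℕ) = 2 := by
    rw [hμrdef, ← Real.rpow_natCast ((2:ℝ) ^ ((4:ℝ)⁻¹)) 4, ← Real.rpow_mul (le_of_lt hC2)]
    norm_num
  set lam : ℝ := μr ^ (3:ℕ) with hlamdef
  have hlam1 : 1 < lam := by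
    rw [hlamdef]; exact one_lt_pow₀ hμr1 (by norm_num)
  have hlam0 : 0 < lam := lt_trans one_pos hlam1
  have hlam2 : lam ≤ 2 := by
    rw [← hμr4, hlamdef]
    exact le_of_lt (pow_lt_pow_right₀ hμr1 (by norm_num))
  have hloglam : Real.log lam = 3 * ((4:ℝ)⁻¹ * Real.log 2) := by
    rw [hlamdef, Real.log_pow, hμrdef, Real.log_rpow hC2]
    push_cast; ring
  have hloglam_pos : 0 < Real.log lam := Real.log_pos hlam1
  have hlog2 : 0 < Real.log 2 := Real.log_pos one_lt_two
  set C' : ℝ := C * (21/20) with hC'def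
  have hCC' : C < C' := by rw [hC'def]; linarith
  have hC'0 : 0 < C' := lt_trans hC hCC'
  have hlamn0 : 0 < lam ^ n := pow_pos hlam0 n
  -- key numerical inequality
  have h75 : (7:ℝ)/5 < μr ^ (2:ℕ) := by
    apply lt_of_pow_lt_pow_left₀ 2 (pow_nonneg hμr0.le 2)
    rw [← pow_mul]
    norm_num [hμr4]
  have hμrn : μr ^ (2:ℕ) ≤ μr ^ n := pow_le_pow_right₀ (le_of_lt hμr1) hn
  have h2n : (2:ℝ)^n = lam^n * μr^n := by
    rw [hlamdef, ← mul_pow, ← pow_succ, ← hμr4]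
  have hnum : C' * lam ^ n * (4/3) < C * 2 ^ n := by
    rw [h2n, hC'def]
    have h1 : (7:ℝ)/5 < μr ^ n := lt_of_lt_of_le h75 hμrn
    have h2 := mul_lt_mul_of_pos_left h1 (mul_pos hC hlamn0)
    have h3 : C * lam ^ n * (7/5) = C * (21/20) * lam ^ n * (4/3) := by ring
    calc C * (21/20) * lam ^ n * (4/3) = C * lam ^ n * (7/5) := by ring
      _ < C * lam ^ n * (μr ^ n) := by linarith
      _ = C * (lam ^ n * μr ^ n) := by ring
  -- eventual boundedness from the limsup hypothesis
  have hev : ∀ᶠ ε in nhdsWithin (0:ℝ) (Set.Ioi 0),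
      ENNReal.ofReal (φ (1 / ε)) / (Ω * ENNReal.ofReal (ε ^ n)) *
        ∫⁻ x in ball x0 ε, Q x < ENNReal.ofReal C' := by
    exact Filter.eventually_lt_of_limsup_lt
      (lt_of_le_of_lt hlimsup ((ENNReal.ofReal_lt_ofReal_iff hC'0).2 hCC'))
  rw [eventually_nhdsWithin_iff, Metric.eventually_nhds_iff] at hev
  obtain ⟨r₀, hr₀, hevr⟩ := hev
  -- ball estimate
  have hball : ∀ r : ℝ, 0 < r → r < r₀ →
      ENNReal.ofReal (φ (1/r)) * ∫⁻ x in ball x0 r, Q x ≤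
        ENNReal.ofReal C' * (Ω * ENNReal.ofReal (r^n)) := by
    intro r hr hrr
    have h1 := hevr (y := r) (by rw [Real.dist_eq, sub_zero, abs_of_pos hr]; exact hrr)
      (Set.mem_Ioi.2 hr)
    have hb0 : Ω * ENNReal.ofReal (r^n) ≠ 0 := by
      simp only [ne_eq, mul_eq_zero, not_or]
      exact ⟨hΩ0, by simp [ENNReal.ofReal_eq_zero, not_le, pow_pos hr]⟩
    have hbt : Ω * ENNReal.ofReal (r^n) ≠ ⊤ := ENNReal.mul_ne_top hΩtop ENNReal.ofReal_ne_top
    calc ENNReal.ofReal (φ (1/r)) * ∫⁻ x in ball x0 r, Q x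
        = (ENNReal.ofReal (φ (1/r)) / (Ω * ENNReal.ofReal (r^n)) *
            ∫⁻ x in ball x0 r, Q x) * (Ω * ENNReal.ofReal (r^n)) := by
          rw [mul_right_comm, ENNReal.div_mul_cancel hb0 hbt]
      _ ≤ ENNReal.ofReal C' * (Ω * ENNReal.ofReal (r^n)) := mul_le_mul_left h1.le _
  -- choice of ε0'
  have hT0 : 0 < T := lt_of_lt_of_le ha hT
  set ε0' : ℝ := min (min (r₀/2) (1/(2*T))) (1/2) with hε0def
  have hε0pos : 0 < ε0' := by positivity
  have hε0r₀ : ε0' < r₀ := by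
    calc ε0' ≤ r₀/2 := le_trans (min_le_left _ _) (min_le_left _ _)
      _ < r₀ := by linarith
  have hε0T : ε0' ≤ 1/(2*T) := le_trans (min_le_left _ _) (min_le_right _ _)
  have hε0half : ε0' ≤ 1/2 := min_le_right _ _
  -- per-annulus estimate
  have key : ∀ r : ℝ, 0 < r → r ≤ ε0' →
      ∫⁻ x in {x : EuclideanSpace ℝ (Fin n) | r/lam ≤ dist x x0 ∧ dist x x0 < r},
          ENNReal.ofReal (φ (1 / dist x x0)) * Q x / ENNReal.ofReal ((dist x x0) ^ n) ≤
        ENNReal.ofReal (γ * C' * lam ^ n) * Ω := by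
    intro r hr hrle
    have hrr₀ : r < r₀ := lt_of_le_of_lt hrle hε0r₀
    have hrT : r ≤ 1/(2*T) := hrle.trans hε0T
    have h2Tr : 2*T ≤ 1/r := by
      rw [le_div_iff₀ hr]
      rw [le_div_iff₀ (by positivity)] at hrT
      linarith
    have hTinv : T ≤ 1/r := by linarith
    have ha_inv : a ≤ 1/r := le_trans hT hTinv
    set s : ℝ := r / lam with hsdef
    have hs0 : 0 < s := by positivity
    have hsr : s < r := div_lt_self hr hlam1
    have hrs : r / s = lam := by
      rw [hsdef]; field_simp
    -- pointwise bound on the annulus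
    have hpt : ∀ x ∈ {x : EuclideanSpace ℝ (Fin n) | s ≤ dist x x0 ∧ dist x x0 < r},
        ENNReal.ofReal (φ (1 / dist x x0)) * Q x / ENNReal.ofReal ((dist x x0) ^ n) ≤
          ENNReal.ofReal (γ * φ (1/r)) / ENNReal.ofReal (s^n) * Q x := by
      rintro x ⟨hxs, hxr⟩
      have hd0 : 0 < dist x x0 := lt_of_lt_of_le hs0 hxs
      have hrd : 1/r ≤ 1/dist x x0 := one_div_le_one_div_of_le hd0 hxr.le
      have hda : a ≤ 1 / dist x x0 := le_trans ha_inv hrd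
      have hds : 1 / dist x x0 ≤ lam / r := by
        have := one_div_le_one_div_of_le hs0 hxs
        rwa [hsdef, one_div_div] at this
      have halr : a ≤ lam / r := by
        calc a ≤ 1/r := ha_inv
          _ ≤ lam/r := (div_le_div_iff_of_pos_right hr).2 hlam1.le
      have hφd : φ (1 / dist x x0) ≤ γ * φ (1/r) := by
        calc φ (1 / dist x x0) ≤ φ (lam / r) := hφ_mono _ _ hda hds
          _ ≤ φ (2 / r) := hφ_mono _ _ halr ((div_le_div_iff_of_pos_right hr).2 hlam2)
          _ = φ (2 * (1/r)) := by rw [mul_one_div]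
          _ ≤ γ * φ (1/r) := hdoubling _ hTinv
      have hdn : s^n ≤ (dist x x0)^n := pow_le_pow_left₀ hs0.le hxs n
      calc ENNReal.ofReal (φ (1 / dist x x0)) * Q x / ENNReal.ofReal ((dist x x0)^n)
          = ENNReal.ofReal (φ (1 / dist x x0)) / ENNReal.ofReal ((dist x x0)^n) * Q x := by
            rw [div_eq_mul_inv, div_eq_mul_inv]
            exact mul_right_comm _ _ _
        _ ≤ ENNReal.ofReal (γ * φ (1/r)) / ENNReal.ofReal (s^n) * Q x :=
            mul_le_mul_left (ENNReal.div_le_div (ENNReal.ofReal_le_ofReal hφd)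
              (ENNReal.ofReal_le_ofReal hdn)) _
    -- integrate the pointwise bound
    have hctop : ENNReal.ofReal (γ * φ (1/r)) / ENNReal.ofReal (s^n) ≠ ⊤ := by
      apply ne_of_lt
      apply ENNReal.div_lt_top ENNReal.ofReal_ne_top
      simp [ENNReal.ofReal_eq_zero, not_le, pow_pos hs0]
    have hφr : 0 ≤ φ (1/r) := hφ_nonneg _ ha_inv
    have hIble := hball r hr hrr₀
    have hsub : {x : EuclideanSpace ℝ (Fin n) | s ≤ dist x x0 ∧ dist x x0 < r} ⊆ ball x0 r :=
      fun x hx => mem_ball.2 hx.2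
    have hfinal :
        ENNReal.ofReal (γ * φ (1/r)) / ENNReal.ofReal (s^n) * ∫⁻ x in ball x0 r, Q x ≤
          ENNReal.ofReal (γ * C' * lam ^ n) * Ω := by
      have hdivval : ENNReal.ofReal (r^n) * (ENNReal.ofReal (s^n))⁻¹ = ENNReal.ofReal (lam^n) := by
        rw [← div_eq_mul_inv, ← ENNReal.ofReal_div_of_pos (pow_pos hs0 n), ← div_pow, hrs]
      have h1 : ENNReal.ofReal (γ * φ (1/r)) / ENNReal.ofReal (s^n) * ∫⁻ x in ball x0 r, Q x =
          ENNReal.ofReal γ * (ENNReal.ofReal (s^n))⁻¹ *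
            (ENNReal.ofReal (φ (1/r)) * ∫⁻ x in ball x0 r, Q x) := by
        rw [div_eq_mul_inv, ENNReal.ofReal_mul hγ.le]; ring
      rw [h1]
      calc ENNReal.ofReal γ * (ENNReal.ofReal (s^n))⁻¹ *
            (ENNReal.ofReal (φ (1/r)) * ∫⁻ x in ball x0 r, Q x)
          ≤ ENNReal.ofReal γ * (ENNReal.ofReal (s^n))⁻¹ *
            (ENNReal.ofReal C' * (Ω * ENNReal.ofReal (r^n))) := mul_le_mul_right hIble _
        _ = ENNReal.ofReal γ * ENNReal.ofReal C' *
            (ENNReal.ofReal (r^n) * (ENNReal.ofReal (s^n))⁻¹) * Ω := by ring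
        _ = ENNReal.ofReal (γ * C' * lam ^ n) * Ω := by
            rw [hdivval, ← ENNReal.ofReal_mul hγ.le,
              ← ENNReal.ofReal_mul (mul_nonneg hγ.le hC'0.le)]
    calc ∫⁻ x in {x : EuclideanSpace ℝ (Fin n) | s ≤ dist x x0 ∧ dist x x0 < r},
          ENNReal.ofReal (φ (1 / dist x x0)) * Q x / ENNReal.ofReal ((dist x x0) ^ n)
        ≤ ∫⁻ x in {x : EuclideanSpace ℝ (Fin n) | s ≤ dist x x0 ∧ dist x x0 < r},
            ENNReal.ofReal (γ * φ (1/r)) / ENNReal.ofReal (s^n) * Q x :=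
          setLIntegral_mono (hQ.const_mul _) hpt
      _ = ENNReal.ofReal (γ * φ (1/r)) / ENNReal.ofReal (s^n) *
            ∫⁻ x in {x : EuclideanSpace ℝ (Fin n) | s ≤ dist x x0 ∧ dist x x0 < r}, Q x :=
          lintegral_const_mul' _ _ hctop
      _ ≤ ENNReal.ofReal (γ * φ (1/r)) / ENNReal.ofReal (s^n) * ∫⁻ x in ball x0 r, Q x :=
          mul_le_mul_right (lintegral_mono_set hsub) _
      _ ≤ ENNReal.ofReal (γ * C' * lam ^ n) * Ω := hfinal
  -- sum over annuli by induction
  have hsum : ∀ K : ℕ,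
      ∫⁻ x in {x : EuclideanSpace ℝ (Fin n) | ε0'/lam^K ≤ dist x x0 ∧ dist x x0 < ε0'},
          ENNReal.ofReal (φ (1 / dist x x0)) * Q x / ENNReal.ofReal ((dist x x0) ^ n) ≤
        (K : ℝ≥0∞) * (ENNReal.ofReal (γ * C' * lam ^ n) * Ω) := by
    intro K
    induction K with
    | zero =>
      have hempty : {x : EuclideanSpace ℝ (Fin n) | ε0'/lam^0 ≤ dist x x0 ∧ dist x x0 < ε0'} =
          (∅ : Set (EuclideanSpace ℝ (Fin n))) := by
        ext x
        simp only [pow_zero, div_one, mem_setOf_eq, mem_empty_iff_false, iff_false, not_and, not_lt]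
        intro h1; exact h1
      rw [hempty]
      simp
    | succ K ih =>
      have hsub2 : {x : EuclideanSpace ℝ (Fin n) | ε0'/lam^(K+1) ≤ dist x x0 ∧ dist x x0 < ε0'} ⊆
          {x : EuclideanSpace ℝ (Fin n) | (ε0'/lam^K)/lam ≤ dist x x0 ∧ dist x x0 < ε0'/lam^K} ∪
          {x : EuclideanSpace ℝ (Fin n) | ε0'/lam^K ≤ dist x x0 ∧ dist x x0 < ε0'} := by
        rintro x ⟨h1, h2⟩
        by_cases hcase : ε0'/lam^K ≤ dist x x0
        · right; exact ⟨hcase, h2⟩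
        · left
          refine ⟨?_, not_le.1 hcase⟩
          rw [div_div, ← pow_succ]
          exact h1
      have hKpow : (1:ℝ) ≤ lam ^ K := one_le_pow₀ hlam1.le
      calc ∫⁻ x in {x : EuclideanSpace ℝ (Fin n) | ε0'/lam^(K+1) ≤ dist x x0 ∧ dist x x0 < ε0'},
            ENNReal.ofReal (φ (1 / dist x x0)) * Q x / ENNReal.ofReal ((dist x x0) ^ n)
          ≤ ∫⁻ x in {x : EuclideanSpace ℝ (Fin n) |
                (ε0'/lam^K)/lam ≤ dist x x0 ∧ dist x x0 < ε0'/lam^K} ∪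
              {x : EuclideanSpace ℝ (Fin n) | ε0'/lam^K ≤ dist x x0 ∧ dist x x0 < ε0'},
              ENNReal.ofReal (φ (1 / dist x x0)) * Q x / ENNReal.ofReal ((dist x x0) ^ n) :=
            lintegral_mono_set hsub2
        _ ≤ (∫⁻ x in {x : EuclideanSpace ℝ (Fin n) |
                (ε0'/lam^K)/lam ≤ dist x x0 ∧ dist x x0 < ε0'/lam^K},
              ENNReal.ofReal (φ (1 / dist x x0)) * Q x / ENNReal.ofReal ((dist x x0) ^ n)) +
            ∫⁻ x in {x : EuclideanSpace ℝ (Fin n) | ε0'/lam^K ≤ dist x x0 ∧ dist x x0 < ε0'},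
              ENNReal.ofReal (φ (1 / dist x x0)) * Q x / ENNReal.ofReal ((dist x x0) ^ n) :=
            lintegral_union_le _ _ _
        _ ≤ ENNReal.ofReal (γ * C' * lam ^ n) * Ω +
            (K : ℝ≥0∞) * (ENNReal.ofReal (γ * C' * lam ^ n) * Ω) :=
            add_le_add (key (ε0'/lam^K) (by positivity)
              (div_le_self hε0pos.le hKpow)) ih
        _ = ((K+1 : ℕ) : ℝ≥0∞) * (ENNReal.ofReal (γ * C' * lam ^ n) * Ω) := by
            rw [Nat.cast_succ, add_mul, one_mul, add_comm]
  -- choose ε1 and conclude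
  refine ⟨ε0', hε0pos, ?_⟩
  set D : ℝ := C * 2^n / Real.log 2 - C' * lam^n / Real.log lam with hDdef
  have hDalt : C' * lam^n / Real.log lam = (C' * lam^n * (4/3)) / Real.log 2 := by
    rw [hloglam]
    field_simp
  have hDpos : 0 < D := by
    rw [hDdef, hDalt, div_sub_div_same]
    exact div_pos (by linarith) hlog2
  set ε1 : ℝ := min (ε0'/2) (Real.exp (-(C' * lam^n / D + 1))) with hε1def
  have hε1pos : 0 < ε1 := lt_min (by positivity) (Real.exp_pos _)
  have hε1lt : ε1 < ε0' := lt_of_le_of_lt (min_le_left _ _) (by linarith)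
  refine ⟨ε1, ⟨hε1pos, hε1lt⟩, ?_⟩
  rintro ε ⟨hε0, hεlt⟩
  set K := ⌈Real.log (ε0'/ε) / Real.log lam⌉₊ with hKdef
  have hεε0 : ε < ε0' := hεlt.trans hε1lt
  have hrat1 : 1 < ε0'/ε := (one_lt_div hε0).2 hεε0
  have hlograt : 0 < Real.log (ε0'/ε) := Real.log_pos hrat1
  have hcover : ε0'/lam^K ≤ ε := by
    have hKx : Real.log (ε0'/ε) ≤ (K:ℝ) * Real.log lam := by
      have := Nat.le_ceil (Real.log (ε0'/ε) / Real.log lam)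
      rw [div_le_iff₀ hloglam_pos] at this
      exact this
    have h2 : ε0'/ε ≤ lam^K :=
      (Real.log_le_log_iff (by positivity) (pow_pos hlam0 K)).1
        (by rw [Real.log_pow]; exact hKx)
    rw [div_le_iff₀ (pow_pos hlam0 K)]
    rw [div_le_iff₀ hε0] at h2
    calc ε0' ≤ lam^K * ε := h2
      _ = ε * lam^K := mul_comm _ _
  have hKle : (K:ℝ) ≤ Real.log (ε0'/ε) / Real.log lam + 1 :=
    (Nat.ceil_lt_add_one (le_of_lt (div_pos hlograt hloglam_pos))).le
  set L : ℝ := Real.log (1/ε) with hLdef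
  have hL1 : C' * lam^n / D + 1 ≤ L := by
    have hεle : ε ≤ Real.exp (-(C' * lam^n / D + 1)) :=
      le_of_lt (lt_of_lt_of_le hεlt (min_le_right _ _))
    have hlog := (Real.log_le_log_iff hε0 (Real.exp_pos _)).2 hεle
    rw [Real.log_exp] at hlog
    rw [hLdef, one_div, Real.log_inv]
    linarith
  have hLpos : 0 < L := by
    have := div_pos (mul_pos hC'0 hlamn0) hDpos
    linarith
  have hlogmono : Real.log (ε0'/ε) ≤ L := by
    rw [hLdef]
    refine (Real.log_le_log_iff (by positivity) (by positivity)).2 ?_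
    gcongr
    linarith
  -- the main real inequality
  have hmain : (K:ℝ) * (C' * lam^n) ≤ C * 2^n / Real.log 2 * L := by
    have hPD : C' * lam^n ≤ D * L := by
      have h1 : D * (C' * lam^n / D + 1) ≤ D * L := mul_le_mul_of_nonneg_left hL1 hDpos.le
      have h2 : D * (C' * lam^n / D + 1) = C' * lam^n + D := by
        field_simp
      rw [h2] at h1
      linarith
    have hK2 : (K:ℝ) ≤ L / Real.log lam + 1 := by
      refine hKle.trans ?_
      have := (div_le_div_iff_of_pos_right hloglam_pos).2 hlogmono
      linarith
    have h3 : (K:ℝ) * (C' * lam^n) ≤ (L / Real.log lam + 1) * (C' * lam^n) :=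
      mul_le_mul_of_nonneg_right hK2 (by positivity)
    have h4 : (L / Real.log lam + 1) * (C' * lam^n) =
        C' * lam^n / Real.log lam * L + C' * lam^n := by
      field_simp
    have h5 : C' * lam^n / Real.log lam * L + C' * lam^n ≤
        C' * lam^n / Real.log lam * L + D * L := add_le_add_right hPD _
    have h6 : C' * lam^n / Real.log lam * L + D * L = C * 2^n / Real.log 2 * L := by
      rw [hDdef]; ring
    linarith
  -- final ENNReal chain
  have hconv : ((K : ℝ≥0∞)) * (ENNReal.ofReal (γ * C' * lam ^ n) * Ω) =
      ENNReal.ofReal ((K:ℝ) * (γ * C' * lam ^ n) * W) := by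
    rw [ENNReal.ofReal_mul (mul_nonneg (Nat.cast_nonneg K) (by positivity)),
      ENNReal.ofReal_mul (Nat.cast_nonneg K),
      ENNReal.ofReal_natCast, hWdef, ENNReal.ofReal_toReal hΩtop]
    ring
  calc ∫⁻ x in {x : EuclideanSpace ℝ (Fin n) | ε < dist x x0 ∧ dist x x0 < ε0'},
        ENNReal.ofReal (φ (1 / dist x x0)) * Q x / ENNReal.ofReal ((dist x x0) ^ n)
      ≤ ∫⁻ x in {x : EuclideanSpace ℝ (Fin n) | ε0'/lam^K ≤ dist x x0 ∧ dist x x0 < ε0'},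
          ENNReal.ofReal (φ (1 / dist x x0)) * Q x / ENNReal.ofReal ((dist x x0) ^ n) :=
        lintegral_mono_set (fun x hx => ⟨le_trans hcover hx.1.le, hx.2⟩)
    _ ≤ (K : ℝ≥0∞) * (ENNReal.ofReal (γ * C' * lam ^ n) * Ω) := hsum K
    _ = ENNReal.ofReal ((K:ℝ) * (γ * C' * lam ^ n) * W) := hconv
    _ ≤ ENNReal.ofReal (γ * C * W * 2 ^ n / Real.log 2 * L) := by
        apply ENNReal.ofReal_le_ofReal
        calc (K:ℝ) * (γ * C' * lam ^ n) * W = (γ * W) * ((K:ℝ) * (C' * lam^n)) := by ring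
          _ ≤ (γ * W) * (C * 2^n / Real.log 2 * L) :=
            mul_le_mul_of_nonneg_left hmain (by positivity)
          _ = γ * C * W * 2 ^ n / Real.log 2 * L := by ring
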